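/- Let f : ℝ^d → ℝ be (H0,H1)-smooth with H0, H1 > 0 and μ-strongly convex with minimizer x* and minimum value f*. Run GD with warm-up step size η_k = θ·min{1/H0, 1/(3H1·F_k)}, F_k := f(x^k) − f*, with θ = 1/(4√2 + 4). If N ≥ 8·H0/(θ·μ) + 12·log(2)·H1·F_0/(θ·μ), then f(x^N) − f* ≤ F_0/2; consequently, GD reaches accuracy f(x^N) − f* ≤ ε within O( (H0/(θμ))·log(F_0/ε) + H1·F_0/(θμ) ) iterations. -/

import Mathlib

set_option maxHeartbeats 1000000

open scoped RealInnerProductSpace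

noncomputable section

lemma deriv_line {d : ℕ} (f : EuclideanSpace ℝ (Fin d) → ℝ)
    (f' : EuclideanSpace ℝ (Fin d) → EuclideanSpace ℝ (Fin d))
    (hgrad : ∀ y, HasGradientAt f (f' y) y)
    (y v : EuclideanSpace ℝ (Fin d)) (t : ℝ) :
    HasDerivAt (fun t : ℝ => f (y + t • v)) ⟪f' (y + t • v), v⟫ t := by
  have hc : HasDerivAt (fun t : ℝ => y + t • v) v t := by
    simpa using ((hasDerivAt_id t).smul_const v).const_add y
  have := (hgrad (y + t • v)).hasFDerivAt.comp_hasDerivAt t hc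
  simpa [InnerProductSpace.toDual_apply_apply, Function.comp_def] using this

lemma descent_aux {d : ℕ} (f : EuclideanSpace ℝ (Fin d) → ℝ)
    (f' : EuclideanSpace ℝ (Fin d) → EuclideanSpace ℝ (Fin d))
    (hgrad : ∀ y, HasGradientAt f (f' y) y)
    (y v : EuclideanSpace ℝ (Fin d)) (L : ℝ)
    (hlip : ∀ t ∈ Set.Icc (0:ℝ) 1, ‖f' (y + t • v) - f' y‖ ≤ L * (t * ‖v‖)) :
    f (y + v) ≤ f y + ⟪f' y, v⟫ + L / 2 * ‖v‖ ^ 2 := by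
  set φ : ℝ → ℝ := fun t => f (y + t • v) - t * ⟪f' y, v⟫ - L * t ^ 2 / 2 * ‖v‖ ^ 2 with hφdef
  have hd : ∀ t : ℝ, HasDerivAt φ (⟪f' (y + t • v), v⟫ - ⟪f' y, v⟫ - L * t * ‖v‖ ^ 2) t := by
    intro t
    have h1 := deriv_line f f' hgrad y v t
    have h2 : HasDerivAt (fun t : ℝ => t * ⟪f' y, v⟫) ⟪f' y, v⟫ t := by
      simpa using (hasDerivAt_id t).mul_const ⟪f' y, v⟫
    have h3 : HasDerivAt (fun t : ℝ => L * t ^ 2 / 2 * ‖v‖ ^ 2) (L * t * ‖v‖ ^ 2) t := by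
      have : HasDerivAt (fun t : ℝ => t ^ 2) (2 * t) t := by simpa using hasDerivAt_pow 2 t
      have := ((this.const_mul L).div_const 2).mul_const (‖v‖ ^ 2)
      exact this.congr_deriv (by ring)
    exact (h1.sub h2).sub h3
  have hmono : φ 1 ≤ φ 0 := by
    have hcont : ContinuousOn φ (Set.Icc 0 1) := fun t _ => ((hd t).continuousAt).continuousWithinAt
    have hder : ∀ t ∈ interior (Set.Icc (0:ℝ) 1), deriv φ t ≤ 0 := by
      intro t ht
      rw [interior_Icc] at ht
      rw [(hd t).deriv]
      have ht' : t ∈ Set.Icc (0:ℝ) 1 := ⟨le_of_lt ht.1, le_of_lt ht.2⟩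
      have hb := hlip t ht'
      have : ⟪f' (y + t • v) - f' y, v⟫ ≤ ‖f' (y + t • v) - f' y‖ * ‖v‖ :=
        real_inner_le_norm _ _
      rw [inner_sub_left] at this
      nlinarith [norm_nonneg v, this, mul_le_mul_of_nonneg_right hb (norm_nonneg v)]
    exact antitoneOn_of_deriv_nonpos (convex_Icc 0 1) hcont
      (fun t ht => ((hd t).differentiableAt).differentiableWithinAt) hder
      (Set.left_mem_Icc.2 zero_le_one) (Set.right_mem_Icc.2 zero_le_one) zero_le_one
  have h0 : φ 0 = f y := by simp [hφdef]
  have h1 : φ 1 = f (y + v) - ⟪f' y, v⟫ - L / 2 * ‖v‖ ^ 2 := by simp [hφdef]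
  rw [h0, h1] at hmono; linarith

lemma grad_bound {d : ℕ} (f : EuclideanSpace ℝ (Fin d) → ℝ)
    (f' : EuclideanSpace ℝ (Fin d) → EuclideanSpace ℝ (Fin d))
    (H0 H1 : ℝ) (xstar : EuclideanSpace ℝ (Fin d))
    (hH0 : 0 < H0) (hH1 : 0 < H1)
    (hgrad : ∀ y, HasGradientAt f (f' y) y)
    (hsmooth : ∀ y z : EuclideanSpace ℝ (Fin d),
      Real.sqrt H1 * ‖z - y‖ ≤ 1 →
      ‖f' z - f' y‖ ≤ (H0 + H1 * (f y - f xstar)) * ‖z - y‖)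
    (hmin : ∀ y, f xstar ≤ f y)
    (y : EuclideanSpace ℝ (Fin d)) :
    ‖f' y‖ * Real.sqrt H1 ≤ max H0 (3 * H1 * (f y - f xstar)) := by
  set s := Real.sqrt H1 with hs_def
  have hs : 0 < s := Real.sqrt_pos.2 hH1
  have hs2 : s ^ 2 = H1 := Real.sq_sqrt hH1.le
  set G := ‖f' y‖ with hG_def
  set Fy := f y - f xstar with hFy_def
  set M := max H0 (3 * H1 * Fy) with hM_def
  set L := H0 + H1 * Fy with hL_def
  have hFy0 : 0 ≤ Fy := sub_nonneg.2 (hmin y)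
  have hM0 : 0 < M := lt_of_lt_of_le hH0 (le_max_left _ _)
  have hL0 : 0 ≤ L := by positivity
  by_contra hcon
  push_neg at hcon
  have hG0 : 0 < G := by
    rcases le_or_gt G 0 with h | h
    · exfalso; nlinarith [mul_nonpos_of_nonpos_of_nonneg h hs.le]
    · exact h
  set v : EuclideanSpace ℝ (Fin d) := (-(1 / (s * G))) • f' y with hv_def
  have hnv : ‖v‖ = 1 / s := by
    rw [hv_def, norm_smul, Real.norm_eq_abs, abs_neg, abs_of_pos (by positivity), ← hG_def]
    field_simp
  have hlip : ∀ t ∈ Set.Icc (0:ℝ) 1, ‖f' (y + t • v) - f' y‖ ≤ L * (t * ‖v‖) := by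
    intro t ht
    have hnt : ‖(y + t • v) - y‖ = t * ‖v‖ := by
      rw [add_sub_cancel_left, norm_smul, Real.norm_eq_abs, abs_of_nonneg ht.1]
    have hcond : s * ‖(y + t • v) - y‖ ≤ 1 := by
      rw [hnt, hnv]
      rw [mul_comm t, ← mul_assoc]
      rw [mul_one_div, div_self hs.ne']
      nlinarith [ht.2, ht.1]
    have := hsmooth y (y + t • v) hcond
    rw [hnt] at this
    exact this
  have hdesc := descent_aux f f' hgrad y v L hlip
  have hinner : ⟪f' y, v⟫ = -(G / s) := by
    rw [hv_def, real_inner_smul_right, real_inner_self_eq_norm_sq, ← hG_def]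
    field_simp
  have hfmin := hmin (y + v)
  rw [hinner, hnv] at hdesc
  -- f* ≤ f y - G/s + L/2 * (1/s)^2
  have h1 : G / s ≤ Fy + L / (2 * H1) := by
    have he : (1 / s) ^ 2 = 1 / H1 := by rw [div_pow, one_pow, hs2]
    rw [he] at hdesc
    have h := hfmin.trans hdesc
    have he2 : L / 2 * (1 / H1) = L / (2 * H1) := by ring
    rw [hFy_def]
    linarith
  have h3 : G * s ≤ Fy * H1 + L / 2 := by
    have e : G * s = (G / s) * H1 := by rw [← hs2]; field_simp
    have e2 : (Fy + L / (2 * H1)) * H1 = Fy * H1 + L / 2 := by field_simp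
    rw [e, ← e2]
    exact mul_le_mul_of_nonneg_right h1 hH1.le
  have hm1 : H0 ≤ M := le_max_left _ _
  have hm2 : 3 * H1 * Fy ≤ M := le_max_right _ _
  have : G * s ≤ M := by rw [hL_def] at h3; nlinarith
  linarith

lemma key_step {d : ℕ} (f : EuclideanSpace ℝ (Fin d) → ℝ)
    (f' : EuclideanSpace ℝ (Fin d) → EuclideanSpace ℝ (Fin d))
    (H0 H1 θ μ : ℝ) (xstar : EuclideanSpace ℝ (Fin d))
    (hH0 : 0 < H0) (hH1 : 0 < H1) (hμ : 0 < μ)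
    (hθ0 : 0 < θ) (hθ8 : θ ≤ 1 / 8)
    (hgrad : ∀ y, HasGradientAt f (f' y) y)
    (hsmooth : ∀ y z : EuclideanSpace ℝ (Fin d),
      Real.sqrt H1 * ‖z - y‖ ≤ 1 →
      ‖f' z - f' y‖ ≤ (H0 + H1 * (f y - f xstar)) * ‖z - y‖)
    (hsc : ∀ y z : EuclideanSpace ℝ (Fin d),
      f y - f z + μ / 2 * ‖y - z‖ ^ 2 ≤ ⟪f' y, y - z⟫)
    (hmin : ∀ y, f xstar ≤ f y)
    (y : EuclideanSpace ℝ (Fin d)) :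
    f (y - (θ / max H0 (3 * H1 * (f y - f xstar))) • f' y) - f xstar ≤
      (1 - θ * μ / max H0 (3 * H1 * (f y - f xstar))) * (f y - f xstar) := by
  set s := Real.sqrt H1 with hs_def
  have hs : 0 < s := Real.sqrt_pos.2 hH1
  set G := ‖f' y‖ with hG_def
  set Fy := f y - f xstar with hFy_def
  set M := max H0 (3 * H1 * Fy) with hM_def
  set L := H0 + H1 * Fy with hL_def
  have hFy0 : 0 ≤ Fy := sub_nonneg.2 (hmin y)
  have hM0 : 0 < M := lt_of_lt_of_le hH0 (le_max_left _ _)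
  have hL0 : 0 ≤ L := by positivity
  set η := θ / M with hη_def
  have hη0 : 0 ≤ η := by positivity
  have hGs : G * s ≤ M := grad_bound f f' H0 H1 xstar hH0 hH1 hgrad hsmooth hmin y
  have hG0 : 0 ≤ G := norm_nonneg _
  clear_value s Fy M L η
  set v : EuclideanSpace ℝ (Fin d) := (-η) • f' y with hv_def
  clear_value v
  have hxv : y - η • f' y = y + v := by rw [hv_def, neg_smul, sub_eq_add_neg]
  have hnv : ‖v‖ = η * G := by
    rw [hv_def, norm_smul, Real.norm_eq_abs, abs_neg, abs_of_nonneg hη0, ← hG_def]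
  have hsv : s * ‖v‖ ≤ θ := by
    rw [hnv]
    calc s * (η * G) = η * (G * s) := by ring
    _ ≤ η * M := mul_le_mul_of_nonneg_left hGs hη0
    _ = θ := by rw [hη_def, div_mul_cancel₀ _ hM0.ne']
  have hθ1 : θ ≤ 1 := by linarith
  have hlip : ∀ t ∈ Set.Icc (0:ℝ) 1, ‖f' (y + t • v) - f' y‖ ≤ L * (t * ‖v‖) := by
    intro t ht
    have hnt : ‖(y + t • v) - y‖ = t * ‖v‖ := by
      rw [add_sub_cancel_left, norm_smul, Real.norm_eq_abs, abs_of_nonneg ht.1]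
    have hcond : s * ‖(y + t • v) - y‖ ≤ 1 := by
      rw [hnt]
      have h1 : t * ‖v‖ ≤ ‖v‖ := by nlinarith [norm_nonneg v, ht.1, ht.2]
      nlinarith [mul_le_mul_of_nonneg_left h1 hs.le]
    have := hsmooth y (y + t • v) hcond
    rw [hnt] at this
    rw [hL_def, hFy_def]
    exact this
  have hdesc := descent_aux f f' hgrad y v L hlip
  have hinner : ⟪f' y, v⟫ = -(η * G ^ 2) := by
    rw [hv_def, real_inner_smul_right, real_inner_self_eq_norm_sq, ← hG_def]
    ring
  -- PL inequality
  have hPL : 2 * μ * Fy ≤ G ^ 2 := by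
    have h1 := hsc y xstar
    have h2 : ⟪f' y, y - xstar⟫ ≤ G * ‖y - xstar‖ := real_inner_le_norm _ _
    set r := ‖y - xstar‖
    nlinarith [sq_nonneg (G - μ * r), hμ]
  -- L * η small
  have hLη : L * η ≤ 1 := by
    have hm1 : H0 ≤ M := by rw [hM_def]; exact le_max_left _ _
    have hm2 : 3 * H1 * Fy ≤ M := by rw [hM_def]; exact le_max_right _ _
    have hL43 : L ≤ 4 / 3 * M := by rw [hL_def]; linarith
    have : L * η ≤ 4 / 3 * M * η := mul_le_mul_of_nonneg_right hL43 hη0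
    have he : M * η = θ := by rw [hη_def, mul_comm M (θ / M), div_mul_cancel₀ _ hM0.ne']
    have : (4:ℝ) / 3 * M * η = 4 / 3 * (M * η) := by ring
    linarith
  rw [← hxv, hinner, hnv] at hdesc
  -- combine
  have hrhs : (1 - θ * μ / M) * Fy = Fy - η * μ * Fy := by rw [hη_def]; ring
  rw [hFy_def] at hrhs ⊢
  rw [hrhs]
  have e : L / 2 * (η * G) ^ 2 = 1 / 2 * ((L * η) * (η * G ^ 2)) := by ring
  rw [e] at hdesc
  have h1 : (L * η) * (η * G ^ 2) ≤ 1 * (η * G ^ 2) :=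
    mul_le_mul_of_nonneg_right hLη (mul_nonneg hη0 (sq_nonneg G))
  have h2 : η * (2 * μ * Fy) ≤ η * G ^ 2 := mul_le_mul_of_nonneg_left hPL hη0
  rw [hFy_def] at h2 hFy0
  linarith

lemma rate_arith (F : ℕ → ℝ) (H0 H1 A : ℝ) (hH0 : 0 < H0) (hH1 : 0 < H1) (hA : 0 < A)
    (hF0 : ∀ k, 0 ≤ F k)
    (hkey : ∀ k, F (k + 1) ≤ (1 - A / max H0 (3 * H1 * F k)) * F k) :
    (∀ N : ℕ, 8 * H0 / A + 12 * Real.log 2 * H1 * F 0 / A ≤ N → F N ≤ F 0 / 2) ∧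
    (∃ C : ℝ, 0 < C ∧ ∀ ε : ℝ, 0 < ε → ∀ N : ℕ,
      C * (H0 / A * Real.log (F 0 / ε) + H1 * F 0 / A) ≤ N → F N ≤ ε) := by
  have hMpos : ∀ k, 0 < max H0 (3 * H1 * F k) := fun k =>
    lt_of_lt_of_le hH0 (le_max_left _ _)
  have hmono : ∀ k, F (k + 1) ≤ F k := by
    intro k
    have hc : 0 ≤ A / max H0 (3 * H1 * F k) := div_nonneg hA.le (hMpos k).le
    nlinarith [hkey k, hF0 k, mul_nonneg hc (hF0 k)]
  have hanti : ∀ j m : ℕ, F (j + m) ≤ F j := by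
    intro j m
    induction m with
    | zero => simp
    | succ m ih => exact le_trans (hmono (j + m)) ih
  have hFle : ∀ k, F k ≤ F 0 := fun k => by simpa using hanti 0 k
  have hlog2pos : 0 < Real.log 2 := Real.log_pos one_lt_two
  have hlog2lt : Real.log 2 < 1 := by
    have := Real.log_two_lt_d9
    linarith
  constructor
  · -- Part 1
    intro N hN
    set M0 := max H0 (3 * H1 * F 0) with hM0_def
    have hM00 : 0 < M0 := hMpos 0
    set q := A / M0 with hq_def
    have hq0 : 0 < q := div_pos hA hM00
    have hkey2 : ∀ k, F (k + 1) ≤ (1 - q) * F k := by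
      intro k
      have hle : max H0 (3 * H1 * F k) ≤ M0 := by
        apply max_le (le_max_left _ _)
        have : 3 * H1 * F k ≤ 3 * H1 * F 0 := by nlinarith [hFle k]
        exact le_trans this (le_max_right _ _)
      have h1 : q ≤ A / max H0 (3 * H1 * F k) :=
        div_le_div_of_nonneg_left hA.le (hMpos k) hle
      have h2 : (1 - A / max H0 (3 * H1 * F k)) * F k ≤ (1 - q) * F k :=
        mul_le_mul_of_nonneg_right (by linarith) (hF0 k)
      exact le_trans (hkey k) h2
    set r := max 0 (1 - q) with hr_def
    have hr0 : 0 ≤ r := le_max_left _ _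
    have hrkey : ∀ k, F (k + 1) ≤ r * F k := fun k =>
      le_trans (hkey2 k) (mul_le_mul_of_nonneg_right (le_max_right _ _) (hF0 k))
    have hpow : ∀ k, F k ≤ r ^ k * F 0 := by
      intro k
      induction k with
      | zero => simp
      | succ k ih =>
        calc F (k + 1) ≤ r * F k := hrkey k
        _ ≤ r * (r ^ k * F 0) := mul_le_mul_of_nonneg_left ih hr0
        _ = r ^ (k + 1) * F 0 := by ring
    have hrexp : r ≤ Real.exp (-q) :=
      max_le (Real.exp_nonneg _) (by linarith [Real.add_one_le_exp (-q)])
    have hNq : Real.log 2 ≤ N * q := by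
      rw [← add_div, div_le_iff₀ hA] at hN
      have hM0le : M0 ≤ H0 + 3 * H1 * F 0 := by
        apply max_le <;> nlinarith [hF0 0]
      have h1 : Real.log 2 * M0 ≤ N * A := by nlinarith [hF0 0]
      rw [hq_def]
      rw [mul_div_assoc'] at *
      rw [le_div_iff₀ hM00]
      linarith
    have hchain : F N ≤ Real.exp (N * (-q)) * F 0 := by
      calc F N ≤ r ^ N * F 0 := hpow N
      _ ≤ Real.exp (-q) ^ N * F 0 :=
        mul_le_mul_of_nonneg_right (pow_le_pow_left₀ hr0 hrexp N) (hF0 0)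
      _ = Real.exp (N * (-q)) * F 0 := by rw [← Real.exp_nat_mul]
    have hhalf : Real.exp (N * (-q)) ≤ 1 / 2 := by
      have h1 : (N : ℝ) * (-q) ≤ -Real.log 2 := by nlinarith
      calc Real.exp (N * (-q)) ≤ Real.exp (-Real.log 2) := Real.exp_le_exp.2 h1
      _ = 1 / 2 := by rw [Real.exp_neg, Real.exp_log two_pos]; norm_num
    nlinarith [hF0 0, hF0 N]
  · -- Part 2
    rcases lt_or_ge 0 (F 0) with hF0pos | hF0le
    swap
    · exact ⟨1, one_pos, fun ε hε N _ => by linarith [hFle N, hF0 0]⟩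
    set C := 3 + A / (H1 * F 0) with hC_def
    have hC : 0 < C := by positivity
    refine ⟨C, hC, ?_⟩
    intro ε hε N hN
    by_cases hεF : F 0 ≤ ε
    · linarith [hFle N]
    push_neg at hεF
    set llog := Real.log (F 0 / ε) with hllog_def
    have hllog : 0 < llog := Real.log_pos ((one_lt_div hε).2 hεF)
    clear_value C llog
    have hC1 : 1 ≤ C := by
      rw [hC_def]
      have : 0 < A / (H1 * F 0) := by positivity
      linarith
    have hCb : C * (H1 * F 0 / A) = 3 * (H1 * F 0 / A) + 1 := by
      rw [hC_def]; field_simp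
    have ha0 : 0 ≤ H0 / A * llog := mul_nonneg (by positivity) hllog.le
    have hNlb : H0 / A * llog + 3 * (H1 * F 0 / A) + 1 ≤ N := by
      have h1 : C * (H0 / A * llog + H1 * F 0 / A) =
          C * (H0 / A * llog) + C * (H1 * F 0 / A) := by ring
      nlinarith [mul_le_mul_of_nonneg_right hC1 ha0]
    set a1 := A / (3 * H1) with ha1_def
    have ha1 : 0 < a1 := by positivity
    set T := H0 / (3 * H1) with hT_def
    have hT : 0 < T := by positivity
    clear_value a1 T
    -- Phase 1
    have phase1 : ∀ k : ℕ, F k ≤ max (F 0 - k * a1) T := by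
      intro k
      induction k with
      | zero => simpa using le_max_left (F 0) T
      | succ k ih =>
        by_cases hTk : F k ≤ T
        · exact le_trans (le_trans (hmono k) hTk) (le_max_right _ _)
        push_neg at hTk
        have hFkpos : 0 < F k := lt_trans hT hTk
        have hH0lt : H0 < 3 * H1 * F k := by
          rw [hT_def, div_lt_iff₀ (by positivity : (0:ℝ) < 3 * H1)] at hTk
          linarith
        have hmax : max H0 (3 * H1 * F k) = 3 * H1 * F k := max_eq_right hH0lt.le
        have hstep : F (k + 1) ≤ F k - a1 := by
          have h1 := hkey k
          rw [hmax] at h1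
          have h2 : (1 - A / (3 * H1 * F k)) * F k = F k - a1 := by
            rw [ha1_def]; field_simp
          linarith
        rcases le_or_gt (F 0 - k * a1) T with hc | hc
        · have : max (F 0 - k * a1) T = T := max_eq_right hc
          rw [this] at ih
          have : F (k + 1) ≤ T := by linarith
          exact le_trans this (le_max_right _ _)
        · have : max (F 0 - k * a1) T = F 0 - k * a1 := max_eq_left hc.le
          rw [this] at ih
          have : F (k + 1) ≤ F 0 - (k + 1 : ℕ) * a1 := by push_cast; linarith
          exact le_trans this (le_max_left _ _)
    set K1 := Nat.ceil (F 0 / a1) with hK1_def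
    have hK1a : F 0 / a1 ≤ K1 := Nat.le_ceil _
    have hK1lt' : (K1 : ℝ) < F 0 / a1 + 1 := by
      rw [hK1_def]
      exact Nat.ceil_lt_add_one (by positivity)
    clear_value K1
    have hFK1T : F K1 ≤ T := by
      have h1 : F 0 - K1 * a1 ≤ 0 := by
        have := mul_le_mul_of_nonneg_right hK1a ha1.le
        rw [div_mul_cancel₀ _ ha1.ne'] at this
        linarith
      exact le_trans (phase1 K1) (max_le (by linarith) le_rfl)
    have hphase2T : ∀ m : ℕ, F (K1 + m) ≤ T := by
      intro m
      induction m with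
      | zero => simpa using hFK1T
      | succ m ih => exact le_trans (hmono (K1 + m)) ih
    set r2 := max 0 (1 - A / H0) with hr2_def
    have hr20 : 0 ≤ r2 := le_max_left _ _
    have hr2ge : 1 - A / H0 ≤ r2 := le_max_right _ _
    have hr2exp : r2 ≤ Real.exp (-(A / H0)) :=
      max_le (Real.exp_nonneg _) (by linarith [Real.add_one_le_exp (-(A / H0))])
    clear_value r2
    have hstep2 : ∀ m : ℕ, F (K1 + m + 1) ≤ r2 * F (K1 + m) := by
      intro m
      have hTk := hphase2T m
      have hmax : max H0 (3 * H1 * F (K1 + m)) = H0 := by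
        apply max_eq_left
        rw [hT_def] at hTk
        have := mul_le_mul_of_nonneg_left hTk (by positivity : (0:ℝ) ≤ 3 * H1)
        rw [mul_div_cancel₀ _ (by positivity : (3:ℝ) * H1 ≠ 0)] at this
        linarith
      have h1 := hkey (K1 + m)
      rw [hmax] at h1
      have h2 : (1 - A / H0) * F (K1 + m) ≤ r2 * F (K1 + m) :=
        mul_le_mul_of_nonneg_right hr2ge (hF0 _)
      linarith
    have hpow2 : ∀ m : ℕ, F (K1 + m) ≤ r2 ^ m * F 0 := by
      intro m
      induction m with
      | zero => simpa using hFle K1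
      | succ m ih =>
        have h1 : K1 + (m + 1) = K1 + m + 1 := by ring
        rw [h1]
        calc F (K1 + m + 1) ≤ r2 * F (K1 + m) := hstep2 m
        _ ≤ r2 * (r2 ^ m * F 0) := mul_le_mul_of_nonneg_left ih hr20
        _ = r2 ^ (m + 1) * F 0 := by ring
    have hK1lt : (K1 : ℝ) < 3 * (H1 * F 0 / A) + 1 := by
      have h1 : (K1 : ℝ) < F 0 / a1 + 1 := hK1lt'
      have h2 : F 0 / a1 = 3 * (H1 * F 0 / A) := by
        rw [ha1_def]; field_simp
      linarith
    have hNK1 : K1 ≤ N := by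
      have h1 : (K1 : ℝ) ≤ (N : ℝ) := by linarith
      exact_mod_cast h1
    set m := N - K1 with hm_def
    have hNm : N = K1 + m := (Nat.add_sub_cancel' hNK1).symm
    have hmcast : (m : ℝ) = (N : ℝ) - (K1 : ℝ) := by
      rw [hm_def]; push_cast [Nat.cast_sub hNK1]; ring
    clear_value m
    have hmA : H0 / A * llog ≤ (m : ℝ) := by
      linarith [hmcast]
    have hllogle : llog ≤ (m : ℝ) * (A / H0) := by
      have := mul_le_mul_of_nonneg_right hmA (by positivity : (0:ℝ) ≤ A / H0)
      have he : H0 / A * llog * (A / H0) = llog := by field_simp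
      rw [he] at this
      linarith
    have hfin : F N ≤ Real.exp ((m : ℝ) * (-(A / H0))) * F 0 := by
      rw [hNm]
      calc F (K1 + m) ≤ r2 ^ m * F 0 := hpow2 m
      _ ≤ Real.exp (-(A / H0)) ^ m * F 0 :=
        mul_le_mul_of_nonneg_right (pow_le_pow_left₀ hr20 hr2exp m) (hF0 0)
      _ = Real.exp ((m : ℝ) * (-(A / H0))) * F 0 := by rw [← Real.exp_nat_mul]
    have hexp : Real.exp ((m : ℝ) * (-(A / H0))) ≤ ε / F 0 := by
      have h1 : (m : ℝ) * (-(A / H0)) ≤ -llog := by linarith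
      calc Real.exp ((m : ℝ) * (-(A / H0))) ≤ Real.exp (-llog) := Real.exp_le_exp.2 h1
      _ = ε / F 0 := by
        rw [hllog_def, Real.exp_neg, Real.exp_log (div_pos hF0pos hε), inv_div]
    calc F N ≤ Real.exp ((m : ℝ) * (-(A / H0))) * F 0 := hfin
    _ ≤ ε / F 0 * F 0 := mul_le_mul_of_nonneg_right hexp (hF0 0)
    _ = ε := div_mul_cancel₀ ε hF0pos.ne'

/-- Strongly convex rate for GD with warm-up step size on an
`(H0,H1)`-smooth (`H0, H1 > 0`) and `μ`-strongly convex function with minimizer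
`x*` and minimum `f*`, with `θ = 1/(4√2 + 4)` and
`η_k = θ / max{H0, 3H1 F_k}` (encoding `θ·min{1/H0, 1/(3H1 F_k)}` with the
convention `η_k = θ/H0` for `F_k = 0`). If
`N ≥ 8H0/(θμ) + 12 log(2) H1 F₀/(θμ)`, then `f(x^N) - f* ≤ F₀/2`; consequently
there is a constant `C > 0` such that accuracy `f(x^N) - f* ≤ ε` is reached
within `C((H0/(θμ)) log(F₀/ε) + H1 F₀/(θμ))` iterations. -/
theorem gd_warmup_strongly_convex_rate
    {d : ℕ}
    (f : EuclideanSpace ℝ (Fin d) → ℝ)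
    (f' : EuclideanSpace ℝ (Fin d) → EuclideanSpace ℝ (Fin d))
    (H0 H1 θ μ : ℝ)
    (xstar : EuclideanSpace ℝ (Fin d))
    (x : ℕ → EuclideanSpace ℝ (Fin d))
    (hH0 : 0 < H0) (hH1 : 0 < H1) (hμ : 0 < μ)
    (hθ : θ = 1 / (4 * Real.sqrt 2 + 4))
    (hgrad : ∀ y, HasGradientAt f (f' y) y)
    (hsmooth : ∀ y z : EuclideanSpace ℝ (Fin d),
      Real.sqrt H1 * ‖z - y‖ ≤ 1 →
      ‖f' z - f' y‖ ≤ (H0 + H1 * (f y - f xstar)) * ‖z - y‖)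
    -- `μ`-strong convexity
    (hsc : ∀ y z : EuclideanSpace ℝ (Fin d),
      f y - f z + μ / 2 * ‖y - z‖ ^ 2 ≤ ⟪f' y, y - z⟫)
    -- `f` attains its minimum `f*` at `xstar`
    (hmin : ∀ y, f xstar ≤ f y)
    -- GD with warm-up step size
    (hupdate : ∀ k, x (k + 1) =
      x k - (θ / max H0 (3 * H1 * (f (x k) - f xstar))) • f' (x k)) :
    -- halving within the stated number of iterations
    (∀ N : ℕ,
      8 * H0 / (θ * μ) + 12 * Real.log 2 * H1 * (f (x 0) - f xstar) / (θ * μ) ≤ N →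
      f (x N) - f xstar ≤ (f (x 0) - f xstar) / 2) ∧
    -- consequent iteration complexity to reach accuracy `ε`
    (∃ C : ℝ, 0 < C ∧ ∀ ε : ℝ, 0 < ε → ∀ N : ℕ,
      C * (H0 / (θ * μ) * Real.log ((f (x 0) - f xstar) / ε) +
        H1 * (f (x 0) - f xstar) / (θ * μ)) ≤ N →
      f (x N) - f xstar ≤ ε) := by
  have hs2 : (1:ℝ) ≤ Real.sqrt 2 := by
    nlinarith [Real.sq_sqrt (by norm_num : (0:ℝ) ≤ 2), Real.sqrt_nonneg 2]
  have hpos : (0:ℝ) < 4 * Real.sqrt 2 + 4 := by linarith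
  have hθ0 : 0 < θ := by rw [hθ]; positivity
  have hθ8 : θ ≤ 1 / 8 := by
    rw [hθ, div_le_div_iff₀ hpos (by norm_num)]
    linarith
  have hkey : ∀ k, f (x (k + 1)) - f xstar ≤
      (1 - θ * μ / max H0 (3 * H1 * (f (x k) - f xstar))) * (f (x k) - f xstar) := by
    intro k
    rw [hupdate k]
    exact key_step f f' H0 H1 θ μ xstar hH0 hH1 hμ hθ0 hθ8 hgrad hsmooth hsc hmin (x k)
  exact rate_arith (fun k => f (x k) - f xstar) H0 H1 (θ * μ) hH0 hH1
    (mul_pos hθ0 hμ) (fun k => sub_nonneg.2 (hmin _)) hkey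

end
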